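/- Let G be a graph with lists L satisfying v ∈ L(v) and property (P1), and let G' be the auxiliary graph obtained by removing vertices in pairwise list-intersections over edges and adding all E(L(x),L(y)) edges for surviving edges {x,y}. If S is a minimal solution of Multi-Vertex Cover on G (a vertex cover with L(S)=S, minimal in the stated sense), then S ∩ V(G') is a vertex cover of G'. -/
import Mathlib


/-- The surviving vertices of the auxiliary graph `G'`. -/
def survive {V : Type*} (G : SimpleGraph V) (L : V → Set V) : Set V :=
  {v | ¬ ∃ x y, G.Adj x y ∧ v ∈ L x ∧ v ∈ L y}

/-- Adjacency of the auxiliary graph `G'`. -/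
def auxAdj {V : Type*} (G : SimpleGraph V) (L : V → Set V) (a b : V) : Prop :=
  a ∈ survive G L ∧ b ∈ survive G L ∧
    ∃ x y, G.Adj x y ∧ x ∈ survive G L ∧ y ∈ survive G L ∧
      ((a ∈ L x ∧ b ∈ L y) ∨ (a ∈ L y ∧ b ∈ L x))

/-- if `S` is a minimal Multi-Vertex-Cover solution on `G` (a vertex cover
with `L(S) = S`, minimal in the stated sense), then `S ∩ V(G')` is a vertex cover of the
auxiliary graph `G'`. -/
theorem stmt15 {V : Type*} (G : SimpleGraph V) (L : V → Set V) (S : Set V)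
    (hself : ∀ v, v ∈ L v)
    (hP1 : ∀ x y, x ∈ L y → L x ⊆ L y)
    (hcover : ∀ a b, G.Adj a b → a ∈ S ∨ b ∈ S)
    (hclosed : (⋃ v ∈ S, L v) = S)
    (hminimal : ∀ x ∈ S,
      (∃ y, G.Adj x y ∧ y ∉ S) ∨
      (∃ y ∈ S, x ∈ L y ∧ ∃ z, G.Adj y z ∧ z ∉ S)) :
    ∀ a b, auxAdj G L a b → a ∈ S ∩ survive G L ∨ b ∈ S ∩ survive G L := by
  intro a b ⟨ha, hb, x, y, hxy, hx, hy, hcase⟩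
  have hLS : ∀ v ∈ S, L v ⊆ S := fun v hv w hw =>
    hclosed ▸ Set.mem_biUnion hv hw
  rcases hcase with ⟨hax, hby⟩ | ⟨hay, hbx⟩
  · rcases hcover x y hxy with h | h
    · exact Or.inl ⟨hLS x h hax, ha⟩
    · exact Or.inr ⟨hLS y h hby, hb⟩
  · rcases hcover x y hxy with h | h
    · exact Or.inr ⟨hLS x h hbx, hb⟩
    · exact Or.inl ⟨hLS y h hay, ha⟩
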